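/- For every complex number w with |w| ≤ 1, one has |tanh(w/2)| ≤ tan(1/2), where tanh(u) = (e^u − e^{−u})/(e^u + e^{−u}) is the complex hyperbolic tangent (the denominator e^u + e^{−u} is nonzero for |u| ≤ 1/2). -/

import Mathlib

open Real

-- sin t ≥ (25/32) t on [1/2,1]
lemma lem_sin_big {t : ℝ} (h1 : 1/2 ≤ t) (h2 : t ≤ 1) : (25/32) * t ≤ Real.sin t := by
  have hb := abs_sub_le_iff.1 (Real.sin_bound (x := t) (by rw [abs_of_nonneg (by linarith)]; exact h2))
  have h0 : 0 ≤ t := by linarith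
  rw [abs_of_nonneg h0] at hb
  nlinarith [hb.2, sq_nonneg t, sq_nonneg (t-1), sq_nonneg (t*(t-1))]

-- sin t ≥ (731/768) t on [0,1/2]
lemma lem_sin_small {t : ℝ} (h1 : 0 ≤ t) (h2 : t ≤ 1/2) : (731/768) * t ≤ Real.sin t := by
  have hb := abs_sub_le_iff.1 (Real.sin_bound (x := t) (by rw [abs_of_nonneg h1]; linarith))
  rw [abs_of_nonneg h1] at hb
  nlinarith [hb.2, sq_nonneg t, sq_nonneg (t - 1/2), mul_nonneg h1 (sq_nonneg (t - 1/2))]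

-- cos 1 ≤ 53/96
lemma lem_cos_one : Real.cos 1 ≤ 53/96 := by
  have hb := abs_sub_le_iff.1 (Real.cos_bound (x := 1) (by norm_num))
  norm_num at hb
  linarith [hb.1]

-- sinh x ≤ (19/18) x on [0,1/2]
lemma lem_sinh {x : ℝ} (h1 : 0 ≤ x) (h2 : x ≤ 1/2) : Real.sinh x ≤ (19/18) * x := by
  have hxa : |x| ≤ 1 := by rw [abs_of_nonneg h1]; linarith
  have hx2 : |(-x)| ≤ 1 := by rw [abs_neg]; exact hxa
  have hb1 := abs_sub_le_iff.1 (Real.exp_bound hxa (n := 3) (by norm_num))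
  have hb2 := abs_sub_le_iff.1 (Real.exp_bound hx2 (n := 3) (by norm_num))
  rw [abs_of_nonneg h1] at hb1
  rw [abs_neg, abs_of_nonneg h1] at hb2
  have e1 : Real.exp x - (1 + x + x^2/2) ≤ x^3 * (2/9) := by
    have := hb1.1
    norm_num [Finset.sum_range_succ, Nat.factorial] at this
    nlinarith [this]
  have e2 : (1 - x + x^2/2) - Real.exp (-x) ≤ x^3 * (2/9) := by
    have := hb2.2
    norm_num [Finset.sum_range_succ, Nat.factorial] at this
    nlinarith [this]
  rw [Real.sinh_eq]
  nlinarith [e1, e2, pow_le_pow_left₀ h1 h2 3]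

lemma key_ineq {x y : ℝ} (hx : 0 ≤ x) (hy : 0 ≤ y) (hxy : x^2 + y^2 ≤ 1/4) :
    Real.cos 1 * Real.sinh x ^ 2 + Real.sin y ^ 2 ≤ Real.sin (1/2) ^ 2 := by
  have hx2 : x ≤ 1/2 := by nlinarith
  have hy2 : y ≤ 1/2 := by nlinarith
  -- product-to-sum identity
  have hid : Real.sin (1/2) ^ 2 - Real.sin y ^ 2
      = Real.sin (1/2 - y) * Real.sin (1/2 + y) := by
    rw [Real.sin_sub, Real.sin_add]
    nlinarith [Real.sin_sq_add_cos_sq y, Real.sin_sq_add_cos_sq (1/2 : ℝ)]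
  have hA := lem_sin_small (t := 1/2 - y) (by linarith) (by linarith)
  have hB := lem_sin_big (t := 1/2 + y) (by linarith) (by linarith)
  have hprod : (731/768 * (1/2 - y)) * (25/32 * (1/2 + y))
      ≤ Real.sin (1/2 - y) * Real.sin (1/2 + y) :=
    mul_le_mul hA hB (by linarith) (le_trans (by linarith) hA)
  have hs := lem_sinh hx hx2
  have hsnn : 0 ≤ Real.sinh x := by
    rw [← Real.sinh_zero]; exact Real.sinh_le_sinh.2 hx
  have hsq : Real.sinh x ^ 2 ≤ (361/324) * x^2 := by nlinarith
  have hc1 := lem_cos_one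
  have hc0 : (0:ℝ) ≤ Real.cos 1 := Real.cos_one_pos.le
  have h1 : Real.cos 1 * Real.sinh x ^ 2 ≤ (53/96) * ((361/324) * x^2) := by
    have := mul_le_mul hc1 hsq (sq_nonneg _) (by norm_num)
    linarith
  nlinarith [hprod, hid, h1, hxy]

set_option maxHeartbeats 1000000 in
theorem abs_tanh_half_le (w : ℂ) (hw : ‖w‖ ≤ 1) :
    ‖(Complex.exp (w/2) - Complex.exp (-(w/2))) /
      (Complex.exp (w/2) + Complex.exp (-(w/2)))‖ ≤ Real.tan (1/2) := by
  set u : ℂ := w/2 with hu_def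
  set x := u.re with hx_def
  set y := u.im with hy_def
  have hxy : x^2 + y^2 ≤ 1/4 := by
    have h1 : ‖u‖ = ‖w‖ / 2 := by
      rw [hu_def, norm_div]; norm_num
    have h3 : ‖u‖^2 = x^2 + y^2 := by
      rw [Complex.sq_norm, Complex.normSq_apply]; ring
    nlinarith [norm_nonneg u, norm_nonneg w]
  have hu2 : u = (x:ℂ) + (y:ℂ)*Complex.I := (Complex.re_add_im u).symm
  have hsinh : Complex.sinh u
      = ((Real.sinh x * Real.cos y : ℝ) : ℂ) + ((Real.cosh x * Real.sin y : ℝ) : ℂ)*Complex.I := by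
    rw [hu2, Complex.sinh_add, Complex.sinh_mul_I, Complex.cosh_mul_I,
      ← Complex.ofReal_sinh, ← Complex.ofReal_cosh, ← Complex.ofReal_cos, ← Complex.ofReal_sin]
    push_cast
    ring
  have hcosh : Complex.cosh u
      = ((Real.cosh x * Real.cos y : ℝ) : ℂ) + ((Real.sinh x * Real.sin y : ℝ) : ℂ)*Complex.I := by
    rw [hu2, Complex.cosh_add, Complex.sinh_mul_I, Complex.cosh_mul_I,
      ← Complex.ofReal_sinh, ← Complex.ofReal_cosh, ← Complex.ofReal_cos, ← Complex.ofReal_sin]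
    push_cast
    ring
  have hA2 : ‖Complex.sinh u‖^2 = Real.sinh x^2 + Real.sin y^2 := by
    rw [hsinh, Complex.sq_norm, Complex.normSq_add_mul_I]
    nlinarith [Real.sin_sq_add_cos_sq y, Real.cosh_sq x]
  have hB2 : ‖Complex.cosh u‖^2 = Real.sinh x^2 + Real.cos y^2 := by
    rw [hcosh, Complex.sq_norm, Complex.normSq_add_mul_I]
    nlinarith [Real.sin_sq_add_cos_sq y, Real.cosh_sq x]
  -- denominator positivity
  have hy12 : |y| ≤ 1/2 := by
    rw [abs_le]; constructor <;> nlinarith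
  have hcoshalf : (0:ℝ) < Real.cos (1/2) := by
    apply Real.cos_pos_of_mem_Ioo
    constructor <;> nlinarith [Real.pi_gt_three]
  have hcy : Real.cos (1/2) ≤ Real.cos y := by
    rw [← Real.cos_abs y]
    apply Real.cos_le_cos_of_nonneg_of_le_pi (abs_nonneg y) (by nlinarith [Real.pi_gt_three])
    linarith [hy12]
  have hBpos : 0 < ‖Complex.cosh u‖ := by
    have h := norm_nonneg (Complex.cosh u)
    nlinarith [sq_nonneg (Real.sinh x)]
  -- rewrite goal
  have hS : Complex.exp u - Complex.exp (-u) = 2 * Complex.sinh u := (Complex.two_sinh u).symm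
  have hC : Complex.exp u + Complex.exp (-u) = 2 * Complex.cosh u := (Complex.two_cosh u).symm
  rw [hS, hC, norm_div, norm_mul, norm_mul, Complex.norm_two,
    mul_div_mul_left _ _ (two_ne_zero), Real.tan_eq_sin_div_cos,
    div_le_div_iff₀ hBpos hcoshalf]
  -- key inequality
  have hkey := key_ineq (x := |x|) (y := |y|) (abs_nonneg x) (abs_nonneg y)
    (by rw [sq_abs, sq_abs]; exact hxy)
  have hsabs : Real.sinh |x| ^ 2 = Real.sinh x ^ 2 := by
    rcases abs_cases x with ⟨h, _⟩ | ⟨h, _⟩ <;> rw [h] <;> simp [Real.sinh_neg]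
  have hsiabs : Real.sin |y| ^ 2 = Real.sin y ^ 2 := by
    rcases abs_cases y with ⟨h, _⟩ | ⟨h, _⟩ <;> rw [h] <;> simp [Real.sin_neg]
  rw [hsabs, hsiabs] at hkey
  have hcos1 : Real.cos 1 = 2 * Real.cos (1/2)^2 - 1 := by
    have := Real.cos_two_mul (1/2)
    norm_num at this
    exact this
  -- conclude from squares
  have hsq : (‖Complex.sinh u‖ * Real.cos (1/2))^2
      ≤ (Real.sin (1/2) * ‖Complex.cosh u‖)^2 := by
    rw [mul_pow, mul_pow, hA2, hB2]
    have h1 : Real.sin y^2 = 1 - Real.cos y^2 := by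
      nlinarith [Real.sin_sq_add_cos_sq y]
    have h2 : Real.sin (1/2:ℝ)^2 = 1 - Real.cos (1/2:ℝ)^2 := by
      nlinarith [Real.sin_sq_add_cos_sq (1/2:ℝ)]
    rw [h1, h2] at hkey ⊢
    have hc : Real.cos 1 * Real.sinh x^2 = (2 * Real.cos (1/2)^2 - 1) * Real.sinh x^2 := by
      rw [hcos1]
    nlinarith [hkey, hc]
  have hsinpos : (0:ℝ) < Real.sin (1/2) :=
    Real.sin_pos_of_pos_of_le_one (by norm_num) (by norm_num)
  have hn1 : 0 ≤ ‖Complex.sinh u‖ * Real.cos (1/2) :=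
    mul_nonneg (norm_nonneg _) hcoshalf.le
  have hn2 : 0 ≤ Real.sin (1/2) * ‖Complex.cosh u‖ :=
    mul_nonneg hsinpos.le hBpos.le
  have hfin := Real.sqrt_le_sqrt hsq
  rwa [Real.sqrt_sq hn1, Real.sqrt_sq hn2] at hfin
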